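/- For a bounded measurable set A ⊆ ℝ^n with rectifiable boundary and any ξ ∈ ℝ^n, the Lebesgue measure of the symmetric difference A Δ (A + ξ) is at most |ξ| times the (n−1)-dimensional Hausdorff measure of the boundary ∂A. -/

import Mathlib

open MeasureTheory Set Pointwise


theorem seg_frontier {E : Type*} [AddCommGroup E] [Module ℝ E] [TopologicalSpace E]
    [IsTopologicalAddGroup E] [ContinuousSMul ℝ E]
    (A : Set E) (a b : E) (ha : a ∈ A) (hb : b ∉ A) :
    ∃ c ∈ segment ℝ a b, c ∈ frontier A := by
  by_contra h
  push_neg at h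
  have hsub : segment ℝ a b ⊆ interior A ∪ interior Aᶜ := by
    intro x hx
    have hxf : x ∉ frontier A := h x hx
    rw [frontier_eq_closure_inter_closure] at hxf
    by_cases hxA : x ∈ A
    · left
      have : x ∉ closure Aᶜ := fun hc => hxf ⟨subset_closure hxA, hc⟩
      rwa [closure_compl, mem_compl_iff, not_not] at this
    · right
      have : x ∉ closure A := fun hc => hxf ⟨hc, subset_closure hxA⟩
      rwa [interior_compl, mem_compl_iff]
  have hpre : IsPreconnected (segment ℝ a b) := (convex_segment a b).isPreconnected
  rcases hpre.subset_or_subset isOpen_interior isOpen_interior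
      (disjoint_compl_right.mono interior_subset interior_subset) hsub with hc | hc
  · exact hb (interior_subset (hc (right_mem_segment ℝ a b)))
  · exact (interior_subset (hc (left_mem_segment ℝ a b)) : a ∈ Aᶜ) ha

theorem coord_abs_le {n : ℕ} (w : EuclideanSpace ℝ (Fin n)) (i : Fin n) : |w i| ≤ ‖w‖ := by
  have h : w i = inner ℝ (EuclideanSpace.single i (1:ℝ)) w := by
    rw [EuclideanSpace.inner_single_left]; simp
  rw [h]
  calc |inner ℝ (EuclideanSpace.single i (1:ℝ)) w| ≤ ‖EuclideanSpace.single i (1:ℝ)‖ * ‖w‖ :=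
        abs_real_inner_le_norm _ _
    _ = ‖w‖ := by rw [EuclideanSpace.norm_single]; simp

theorem box_vol {n : ℕ} (hn : 0 < n) (ξ : EuclideanSpace ℝ (Fin n)) (hξ : ξ ≠ 0)
    (E : Set (EuclideanSpace ℝ (Fin n))) (hne : E.Nonempty) (hbd : Bornology.IsBounded E) :
    volume (E + segment ℝ (0 : EuclideanSpace ℝ (Fin n)) ξ) ≤
      ENNReal.ofReal (Metric.diam E) ^ (n - 1) *
        (ENNReal.ofReal (Metric.diam E) + (‖ξ‖₊ : ENNReal)) := by
  classical
  set L : ℝ := ‖ξ‖ with hL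
  have hL0 : 0 < L := norm_pos_iff.2 hξ
  set u : EuclideanSpace ℝ (Fin n) := L⁻¹ • ξ with hu_def
  have hu : ‖u‖ = 1 := by
    rw [hu_def, norm_smul, norm_inv, Real.norm_eq_abs, abs_of_pos hL0, inv_mul_cancel₀ hL0.ne']
  set j₀ : Fin n := ⟨0, hn⟩ with hj₀
  -- orthonormal basis with b j₀ = u
  have hON : Orthonormal ℝ (({j₀} : Set (Fin n)).restrict (fun _ => u)) := by
    constructor
    · intro i; exact hu
    · intro i j hij
      have hi : (i : Fin n) = j₀ := i.2
      have hj : (j : Fin n) = j₀ := j.2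
      exact absurd (Subtype.ext (hi.trans hj.symm)) hij
  obtain ⟨b, hb⟩ := hON.exists_orthonormalBasis_extension_of_card_eq (by simp [finrank_euclideanSpace_fin])
  have hbu : b j₀ = u := hb j₀ (mem_singleton _)
  set e := b.repr with he
  have heu : e u = EuclideanSpace.single j₀ 1 := by
    rw [← hbu, he, b.repr_self]
  set δ : ℝ := Metric.diam E with hδ
  have hδ0 : 0 ≤ δ := Metric.diam_nonneg
  -- coordinate difference bound
  have hcd : ∀ i : Fin n, ∀ y ∈ E, ∀ z ∈ E, (e y) i - (e z) i ≤ δ := by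
    intro i y hy z hz
    have h1 : (e y) i - (e z) i ≤ |(e y - e z) i| := by
      rw [PiLp.sub_apply]; exact le_abs_self _
    have h2 : |(e y - e z) i| ≤ ‖e y - e z‖ := coord_abs_le _ _
    have h3 : ‖e y - e z‖ = dist y z := by
      rw [← map_sub, e.norm_map, dist_eq_norm]
    exact h1.trans (h2.trans (h3 ▸ Metric.dist_le_diam_of_mem hbd hy hz))
  set a : Fin n → ℝ := fun i => ⨅ y : E, (e y) i with ha
  obtain ⟨y₀, hy₀⟩ := hne
  haveI : Nonempty ↥E := ⟨⟨y₀, hy₀⟩⟩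
  have hbdd : ∀ i, BddBelow (range fun y : E => (e ↑y) i) := by
    intro i
    exact ⟨(e y₀) i - δ, by rintro x ⟨y, rfl⟩; linarith [hcd i y₀ hy₀ y y.2]⟩
  have hlow : ∀ i, ∀ y ∈ E, a i ≤ (e y) i := fun i y hy => ciInf_le (hbdd i) ⟨y, hy⟩
  have hupp : ∀ i, ∀ y ∈ E, (e y) i ≤ a i + δ := by
    intro i y hy
    have : (e y) i - δ ≤ a i := le_ciInf fun z => by linarith [hcd i y hy z z.2]
    linarith
  set w : Fin n → ℝ := fun i => if i = j₀ then δ + L else δ with hw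
  set Q : Set (EuclideanSpace ℝ (Fin n)) :=
    (MeasurableEquiv.toLp 2 (Fin n → ℝ)).symm ⁻¹' (Set.pi univ fun i => Icc (a i) (a i + w i))
    with hQ
  have hsub : E + segment ℝ (0 : EuclideanSpace ℝ (Fin n)) ξ ⊆ e ⁻¹' Q := by
    rintro x hx
    rw [Set.mem_add] at hx
    obtain ⟨y, hy, s, hs, rfl⟩ := hx
    rw [segment_eq_image] at hs
    obtain ⟨t, ht, rfl⟩ := hs
    have hξLu : ξ = L • u := by
      rw [hu_def, smul_smul, mul_inv_cancel₀ hL0.ne', one_smul]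
    simp only [mem_preimage]
    intro i _
    show e (y + ((1 - t) • 0 + t • ξ)) i ∈ Icc (a i) (a i + w i)
    have hex : e (y + ((1 - t) • 0 + t • ξ)) i
        = (e y) i + t * (L * (EuclideanSpace.single j₀ (1:ℝ)) i) := by
      rw [smul_zero, zero_add, map_add, LinearIsometryEquiv.map_smul]
      nth_rewrite 1 [hξLu]
      rw [LinearIsometryEquiv.map_smul, heu]
      simp [PiLp.add_apply, PiLp.smul_apply, smul_smul, smul_eq_mul, mul_assoc]
    rw [hex]
    rcases eq_or_ne i j₀ with hi | hi
    · subst hi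
      rw [EuclideanSpace.single_apply, if_pos rfl]
      have h1 := hlow j₀ y hy
      have h2 := hupp j₀ y hy
      have h3 : 0 ≤ t * L := mul_nonneg ht.1 hL0.le
      have h4 : t * L ≤ L := by nlinarith [ht.2]
      constructor
      · simp only [w, if_pos rfl]; nlinarith
      · simp only [w, if_pos rfl]; nlinarith
    · rw [EuclideanSpace.single_apply, if_neg hi]
      simp only [w, if_neg hi, mul_zero, mul_zero, add_zero]
      exact ⟨hlow i y hy, hupp i y hy⟩
  have hQm : MeasurableSet Q :=
    (MeasurableEquiv.toLp 2 (Fin n → ℝ)).symm.measurable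
      (MeasurableSet.univ_pi fun i => measurableSet_Icc)
  have hQv : volume Q = ∏ i : Fin n, ENNReal.ofReal (w i) := by
    rw [hQ, (EuclideanSpace.volume_preserving_symm_measurableEquiv_toLp (Fin n)).measure_preimage
      (MeasurableSet.univ_pi fun i => measurableSet_Icc).nullMeasurableSet,
      volume_pi_pi]
    simp [Real.volume_Icc]
  have hwnn : ∀ i, 0 ≤ w i := by
    intro i; simp only [w]; split <;> [linarith [hL0]; exact hδ0]
  have hprod : ∏ i : Fin n, ENNReal.ofReal (w i)
      = ENNReal.ofReal δ ^ (n - 1) * (ENNReal.ofReal δ + (‖ξ‖₊ : ENNReal)) := by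
    rw [← Finset.mul_prod_erase Finset.univ _ (Finset.mem_univ j₀)]
    have h1 : ∏ i ∈ Finset.univ.erase j₀, ENNReal.ofReal (w i)
        = ENNReal.ofReal δ ^ (n - 1) := by
      rw [Finset.prod_congr rfl (fun i hi => ?_), Finset.prod_const,
        Finset.card_erase_of_mem (Finset.mem_univ _), Finset.card_univ, Fintype.card_fin]
      simp only [w, if_neg (Finset.mem_erase.1 hi).1]
    rw [h1]
    simp only [w, if_pos rfl]
    rw [ENNReal.ofReal_add hδ0 hL0.le, mul_comm]
    congr 1
    rw [hL, ofReal_norm, enorm_eq_nnnorm]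
  calc volume (E + segment ℝ (0 : EuclideanSpace ℝ (Fin n)) ξ)
      ≤ volume (e ⁻¹' Q) := measure_mono hsub
    _ = volume Q := b.measurePreserving_repr.measure_preimage hQm.nullMeasurableSet
    _ = _ := by rw [hQv, hprod]


/-- For a bounded measurable set `A ⊆ ℝⁿ` and any `ξ ∈ ℝⁿ`, the Lebesgue measure of
the symmetric difference `A Δ (A + ξ)` is at most `|ξ|` times the `(n-1)`-dimensional
Hausdorff measure of the boundary of `A`. -/
theorem stmt_3 (n : ℕ) (A : Set (EuclideanSpace ℝ (Fin n)))
    (hA : MeasurableSet A) (hAbdd : Bornology.IsBounded A)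
    (ξ : EuclideanSpace ℝ (Fin n)) :
    volume (symmDiff A ((fun x => x + ξ) '' A)) ≤
      (‖ξ‖₊ : ENNReal) * μH[(n : ℝ) - 1] (frontier A) := by
  classical
  by_cases hξ : ξ = 0
  · subst hξ
    simp [symmDiff_self]
  have hn : 0 < n := by
    rcases Nat.eq_zero_or_pos n with h | h
    · subst h
      exact absurd (Subsingleton.elim _ _) hξ
    · exact h
  set F : Set (EuclideanSpace ℝ (Fin n)) := frontier A with hF
  set S : Set (EuclideanSpace ℝ (Fin n)) := segment ℝ 0 ξ with hS
  set d : ℝ := (n : ℝ) - 1 with hd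
  set L' : ENNReal := (‖ξ‖₊ : ENNReal) with hL'
  have hL'0 : L' ≠ 0 := by simpa [hL'] using hξ
  have hL'top : L' ≠ ⊤ := ENNReal.coe_ne_top
  set C : ENNReal := μH[d] F with hC
  -- Step 1: the symmetric difference is contained in F + S
  have step1 : symmDiff A ((fun x => x + ξ) '' A) ⊆ F + S := by
    intro x hx
    have hmem : (x ∈ A ∧ x - ξ ∉ A) ∨ (x ∉ A ∧ x - ξ ∈ A) := by
      have himg : x ∈ (fun x => x + ξ) '' A ↔ x - ξ ∈ A := by
        constructor
        · rintro ⟨y, hy, rfl⟩; simpa using hy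
        · intro h; exact ⟨x - ξ, h, by simp⟩
      rcases hx with ⟨hx1, hx2⟩ | ⟨hx1, hx2⟩
      · exact Or.inl ⟨hx1, fun h => hx2 (himg.2 h)⟩
      · exact Or.inr ⟨hx2, himg.1 hx1⟩
    have hcross : ∃ c ∈ segment ℝ (x - ξ) x, c ∈ frontier A := by
      rcases hmem with ⟨h1, h2⟩ | ⟨h1, h2⟩
      · obtain ⟨c, hc1, hc2⟩ := seg_frontier A x (x - ξ) h1 h2
        exact ⟨c, segment_symm ℝ x (x - ξ) ▸ hc1, hc2⟩
      · exact seg_frontier A (x - ξ) x h2 h1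
    obtain ⟨c, hc1, hc2⟩ := hcross
    rw [segment_eq_image] at hc1
    obtain ⟨t, ht, rfl⟩ := hc1
    rw [Set.mem_add]
    refine ⟨_, hc2, (1 - t) • ξ, ?_, ?_⟩
    · rw [hS, segment_eq_image]
      exact ⟨1 - t, ⟨by linarith [ht.2], by linarith [ht.1]⟩, by simp⟩
    · simp only [sub_sub_cancel]
      module
  refine le_trans (measure_mono step1) ?_
  -- Step 2: volume (F + S) ≤ L' * C
  rcases eq_or_ne C ⊤ with hCtop | hCtop
  · rw [hCtop, ENNReal.mul_top hL'0]
    exact le_top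
  have key : ∀ r : ENNReal, 0 < r → r ≠ ⊤ → volume (F + S) ≤ (C + r) * (r + L') := by
    intro r hr hrtop
    have hinf_le :
        (⨅ (t : ℕ → Set (EuclideanSpace ℝ (Fin n))) (_ : F ⊆ ⋃ k, t k)
            (_ : ∀ k, EMetric.diam (t k) ≤ r),
          ∑' k, ⨆ _ : (t k).Nonempty, EMetric.diam (t k) ^ d) ≤ C := by
      rw [hC, Measure.hausdorffMeasure_apply]
      exact le_iSup₂ (f := fun (r : ENNReal) (_ : 0 < r) =>
        ⨅ (t : ℕ → Set (EuclideanSpace ℝ (Fin n))) (_ : F ⊆ ⋃ k, t k)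
            (_ : ∀ k, EMetric.diam (t k) ≤ r),
          ∑' k, ⨆ _ : (t k).Nonempty, EMetric.diam (t k) ^ d) r hr
    have hlt := lt_of_le_of_lt hinf_le (ENNReal.lt_add_right hCtop hr.ne')
    rw [iInf_lt_iff] at hlt
    obtain ⟨t, hlt⟩ := hlt
    rw [iInf_lt_iff] at hlt
    obtain ⟨htcov, hlt⟩ := hlt
    rw [iInf_lt_iff] at hlt
    obtain ⟨htdiam, hlt⟩ := hlt
    have hsub : F + S ⊆ ⋃ k, (t k + S) := by
      rintro x hx
      rw [Set.mem_add] at hx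
      obtain ⟨f, hf, s, hs, rfl⟩ := hx
      obtain ⟨k, hk⟩ := Set.mem_iUnion.1 (htcov hf)
      exact Set.mem_iUnion.2 ⟨k, Set.add_mem_add hk hs⟩
    have hperk : ∀ k, volume (t k + S) ≤
        (⨆ _ : (t k).Nonempty, EMetric.diam (t k) ^ d) * (r + L') := by
      intro k
      rcases (t k).eq_empty_or_nonempty with he | hne
      · simp [he]
      · have hbd : Bornology.IsBounded (t k) :=
          Metric.isBounded_iff_ediam_ne_top.2 (ne_top_of_le_ne_top hrtop (htdiam k))
        have hofd : ENNReal.ofReal (Metric.diam (t k)) = EMetric.diam (t k) := by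
          rw [Metric.diam, ENNReal.ofReal_toReal hbd.ediam_ne_top]; rfl
        have hpow : EMetric.diam (t k) ^ (n - 1) = EMetric.diam (t k) ^ d := by
          rw [hd, ← ENNReal.rpow_natCast]
          congr 1
          push_cast [Nat.cast_sub hn]
          ring
        calc volume (t k + S) ≤ ENNReal.ofReal (Metric.diam (t k)) ^ (n - 1) *
              (ENNReal.ofReal (Metric.diam (t k)) + L') := box_vol hn ξ hξ (t k) hne hbd
          _ = EMetric.diam (t k) ^ d * (EMetric.diam (t k) + L') := by rw [hofd, hpow]
          _ ≤ EMetric.diam (t k) ^ d * (r + L') :=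
              mul_le_mul_right (add_le_add_left (htdiam k) _) _
          _ = (⨆ _ : (t k).Nonempty, EMetric.diam (t k) ^ d) * (r + L') := by
              rw [iSup_pos hne]
    calc volume (F + S) ≤ volume (⋃ k, (t k + S)) := measure_mono hsub
      _ ≤ ∑' k, volume (t k + S) := measure_iUnion_le _
      _ ≤ ∑' k, (⨆ _ : (t k).Nonempty, EMetric.diam (t k) ^ d) * (r + L') :=
          ENNReal.tsum_le_tsum hperk
      _ = (∑' k, ⨆ _ : (t k).Nonempty, EMetric.diam (t k) ^ d) * (r + L') :=
          ENNReal.tsum_mul_right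
      _ ≤ (C + r) * (r + L') := mul_le_mul_left hlt.le _
  -- limit as r → 0
  have hid : Filter.Tendsto (fun r : ENNReal => r) (nhdsWithin 0 (Set.Ioi 0)) (nhds 0) :=
    Filter.tendsto_id.mono_left nhdsWithin_le_nhds
  have htend : Filter.Tendsto (fun r : ENNReal => (C + r) * (r + L'))
      (nhdsWithin 0 (Set.Ioi 0)) (nhds ((C + 0) * (0 + L'))) := by
    refine ENNReal.Tendsto.mul (hid.const_add C) ?_ (hid.add_const L') ?_
    · right; simpa using hL'top
    · left; simpa using hL'0
  have hev : ∀ᶠ r in nhdsWithin (0 : ENNReal) (Set.Ioi 0),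
      volume (F + S) ≤ (C + r) * (r + L') := by
    have h1 : Set.Iio (1 : ENNReal) ∈ nhdsWithin (0 : ENNReal) (Set.Ioi 0) :=
      nhdsWithin_le_nhds (Iio_mem_nhds zero_lt_one)
    filter_upwards [self_mem_nhdsWithin, h1] with r hr hr1
    exact key r hr (ne_top_of_lt hr1)
  have hfin := ge_of_tendsto htend hev
  rw [add_zero, zero_add] at hfin
  rw [mul_comm] at hfin
  exact hfin
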